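/- Let α > 2 and let Y₁,…,Y_k (k ≥ 2) be i.i.d. random variables with P(|Y_i| ≥ s) ≤ C₂ e^{−s^α} for all s > 0, where C₂ ≥ 1. Then for all t > k, P(Y₁² + ⋯ + Y_k² ≥ t) ≤ C₂^k (2et/k)^k e^{−(t−k)^{α/2} k^{1−α/2}}. -/

import Mathlib

open MeasureTheory ProbabilityTheory

lemma tuple_len : ∀ k n : ℕ, (List.Nat.antidiagonalTuple k n).length ≤ (n + k).choose k
  | 0, 0 => by simp [List.Nat.antidiagonalTuple]
  | 0, n+1 => by simp [List.Nat.antidiagonalTuple]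
  | k+1, 0 => by rw [List.Nat.antidiagonalTuple_zero_right]; simp
  | k+1, n+1 => by
    have h1 := tuple_len k (n+1)
    have h2 := tuple_len (k+1) n
    have unf : ∀ m, List.Nat.antidiagonalTuple (k+1) m =
        (List.Nat.antidiagonal m).flatMap
          (fun ni => (List.Nat.antidiagonalTuple k ni.2).map (Fin.cons ni.1)) :=
      fun m => by rw [List.Nat.antidiagonalTuple]
    have e : (List.Nat.antidiagonalTuple (k+1) (n+1)).length
        = (List.Nat.antidiagonalTuple k (n+1)).length
          + (List.Nat.antidiagonalTuple (k+1) n).length := by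
      rw [unf (n+1), unf n, List.Nat.antidiagonal_succ, List.flatMap_cons,
        List.length_append, List.flatMap_map]
      simp [List.length_flatMap, Function.comp_def]
    rw [e]
    have pascal : (n + 1 + (k + 1)).choose (k + 1)
        = (n + 1 + k).choose k + (n + k + 1).choose (k + 1) := by
      have : n + 1 + (k + 1) = (n + k + 1) + 1 := by omega
      rw [this, Nat.choose_succ_succ]
      congr 2
      omega
    rw [pascal]
    exact Nat.add_le_add h1 h2

lemma tuple_card_le (k n : ℕ) : (Finset.Nat.antidiagonalTuple k n).card ≤ (n + k).choose k :=
  tuple_len k n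

lemma exists_tuple_le {k : ℕ} : ∀ (N : ℕ) (g : Fin k → ℕ), ∑ i, g i = N →
    ∀ M, M ≤ N → ∃ f : Fin k → ℕ, (∀ i, f i ≤ g i) ∧ ∑ i, f i = M := by
  intro N
  induction N with
  | zero =>
    intro g hg M hM
    exact ⟨g, fun i => le_rfl, by omega⟩
  | succ n IH =>
    intro g hg M hM
    rcases eq_or_lt_of_le hM with rfl | hM'
    · exact ⟨g, fun i => le_rfl, hg⟩
    · have hex : ∃ i, g i ≠ 0 := by
        by_contra h
        push_neg at h
        simp [h] at hg
      obtain ⟨i, hi⟩ := hex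
      have hsplit : ∑ j, g j = g i + ∑ j ∈ Finset.univ.erase i, g j :=
        (Finset.add_sum_erase _ _ (Finset.mem_univ i)).symm
      have hupd : ∑ j, Function.update g i (g i - 1) j
          = (g i - 1) + ∑ j ∈ Finset.univ \ {i}, g j :=
        Finset.sum_update_of_mem (Finset.mem_univ i) g (g i - 1)
      have hsd : Finset.univ \ {i} = Finset.univ.erase i := by
        rw [Finset.sdiff_singleton_eq_erase]
      have hsum : ∑ j, Function.update g i (g i - 1) j = n := by
        rw [hupd, hsd]
        omega
      obtain ⟨f, hf1, hf2⟩ := IH _ hsum M (by omega)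
      refine ⟨f, fun j => (hf1 j).trans ?_, hf2⟩
      rcases eq_or_ne j i with rfl | hj
      · rw [Function.update_self]; omega
      · rw [Function.update_of_ne hj]

/-- Upper tail bound: if `Y₁,…,Y_k` (`k ≥ 2`) are i.i.d. with
`P(|Y_i| ≥ s) ≤ C₂ e^{−s^α}` for all `s > 0` (`C₂ ≥ 1`, `α > 2`), then for `t > k`,
`P(Y₁² + ⋯ + Y_k² ≥ t) ≤ C₂^k (2et/k)^k e^{−(t−k)^{α/2} k^{1−α/2}}`. -/
theorem sum_sq_upper_tail {Ω : Type*} [MeasurableSpace Ω]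
    (μ : Measure Ω) [IsProbabilityMeasure μ]
    (α : ℝ) (hα : 2 < α) (C₂ : ℝ) (hC₂ : 1 ≤ C₂)
    (k : ℕ) (hk : 2 ≤ k)
    (Y : Fin k → Ω → ℝ) (hmeas : ∀ i, Measurable (Y i))
    (hindep : iIndepFun Y μ)
    (hident : ∀ i j, Measure.map (Y i) μ = Measure.map (Y j) μ)
    (htail : ∀ i, ∀ s : ℝ, 0 < s →
      μ {ω | s ≤ |Y i ω|} ≤ ENNReal.ofReal (C₂ * Real.exp (-(s ^ α))))
    (t : ℝ) (ht : (k : ℝ) < t) :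
    μ {ω | t ≤ ∑ i, (Y i ω) ^ 2} ≤
      ENNReal.ofReal (C₂ ^ k * (2 * Real.exp 1 * t / k) ^ k *
        Real.exp (-((t - k) ^ (α / 2) * (k : ℝ) ^ (1 - α / 2)))) := by
  have hkpos : (0:ℝ) < k := by positivity
  have ht0 : (0:ℝ) < t := lt_trans hkpos ht
  set m := ⌊t⌋₊ with hm
  have hkm : k ≤ m := Nat.le_floor ht.le
  set M := m - k + 1 with hMdef
  have hMk : M + k = m + 1 := by omega
  have hmle : (m:ℝ) ≤ t := Nat.floor_le ht0.le
  have hMcast : (M:ℝ) = (m:ℝ) + 1 - k := by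
    have h : ((M:ℝ) + k) = (m:ℝ) + 1 := by exact_mod_cast congrArg (Nat.cast (R := ℝ)) hMk
    linarith
  have hMreal : t - k ≤ (M:ℝ) := by
    have h1 : t < (m:ℝ) + 1 := Nat.lt_floor_add_one t
    linarith
  set S := Finset.Nat.antidiagonalTuple k M with hS
  set A : (Fin k → ℕ) → Set Ω := fun f => ⋂ i, {ω | (f i : ℝ) ≤ (Y i ω) ^ 2} with hA
  -- event inclusion
  have hsub : {ω | t ≤ ∑ i, (Y i ω) ^ 2} ⊆ ⋃ f ∈ S, A f := by
    intro ω hω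
    simp only [Set.mem_setOf_eq] at hω
    set g : Fin k → ℕ := fun i => ⌊(Y i ω) ^ 2⌋₊ with hg
    have hgle : ∀ i, (g i : ℝ) ≤ (Y i ω) ^ 2 := fun i => Nat.floor_le (sq_nonneg _)
    have hsumg : M ≤ ∑ i, g i := by
      have hlt : ∀ i, (Y i ω) ^ 2 < (g i : ℝ) + 1 := fun i => Nat.lt_floor_add_one _
      have hne : (Finset.univ : Finset (Fin k)).Nonempty :=
        ⟨⟨0, by omega⟩, Finset.mem_univ _⟩
      have hslt : ∑ i, (Y i ω) ^ 2 < ∑ i, ((g i : ℝ) + 1) :=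
        Finset.sum_lt_sum_of_nonempty hne fun i _ => hlt i
      have hsum1 : ∑ i, ((g i : ℝ) + 1) = (∑ i, (g i : ℝ)) + k := by
        rw [Finset.sum_add_distrib, Finset.sum_const, Finset.card_univ]
        simp
      have h1 : (m:ℝ) < ((∑ i, g i + k : ℕ) : ℝ) := by
        push_cast
        calc (m:ℝ) ≤ t := hmle
          _ ≤ ∑ i, (Y i ω) ^ 2 := hω
          _ < (∑ i, (g i : ℝ)) + k := by rw [← hsum1]; exact hslt
      have h2 : m < ∑ i, g i + k := by exact_mod_cast h1
      omega
    obtain ⟨f, hf1, hf2⟩ := exists_tuple_le (∑ i, g i) g rfl M hsumg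
    have hfS : f ∈ S := Finset.Nat.mem_antidiagonalTuple.mpr hf2
    exact Set.mem_biUnion hfS (Set.mem_iInter.mpr fun i =>
      le_trans (Nat.cast_le.mpr (hf1 i)) (hgle i))
  -- independence: measure of intersection
  have hprod : ∀ f : Fin k → ℕ, μ (A f) = ∏ i, μ {ω | (f i : ℝ) ≤ (Y i ω) ^ 2} := by
    intro f
    exact hindep.meas_iInter fun i =>
      ⟨{x : ℝ | (f i : ℝ) ≤ x ^ 2},
        measurableSet_le measurable_const (measurable_id.pow_const 2), rfl⟩
  -- per-factor tail bound
  have hfac : ∀ (c : ℕ) (i : Fin k),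
      μ {ω | (c : ℝ) ≤ (Y i ω) ^ 2} ≤
        ENNReal.ofReal (C₂ * Real.exp (-((c : ℝ) ^ (α / 2)))) := by
    intro c i
    rcases Nat.eq_zero_or_pos c with rfl | hc
    · have : ((0:ℕ) : ℝ) ^ (α / 2) = 0 := by
        rw [Nat.cast_zero]; exact Real.zero_rpow (by positivity)
      rw [this, neg_zero, Real.exp_zero, mul_one]
      calc μ _ ≤ 1 := prob_le_one
        _ = ENNReal.ofReal 1 := ENNReal.ofReal_one.symm
        _ ≤ ENNReal.ofReal C₂ := ENNReal.ofReal_le_ofReal hC₂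
    · have hcpos : (0:ℝ) < c := by exact_mod_cast hc
      have hs : (0:ℝ) < Real.sqrt c := Real.sqrt_pos.mpr hcpos
      refine le_trans (measure_mono ?_) (le_trans (htail i _ hs) ?_)
      · intro ω hω
        simp only [Set.mem_setOf_eq] at hω ⊢
        calc Real.sqrt c ≤ Real.sqrt ((Y i ω) ^ 2) := Real.sqrt_le_sqrt hω
          _ = |Y i ω| := Real.sqrt_sq_eq_abs _
      · apply ENNReal.ofReal_le_ofReal
        have hsq : Real.sqrt c ^ α = (c : ℝ) ^ (α / 2) := by
          rw [Real.sqrt_eq_rpow, ← Real.rpow_mul hcpos.le]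
          congr 1
          ring
        rw [hsq]
    -- per-tuple bound constant
  have hα2 : (1:ℝ) ≤ α / 2 := by linarith
  set Ex : ℝ := Real.exp (-((t - k) ^ (α / 2) * (k : ℝ) ^ (1 - α / 2))) with hEx
  have hkey : ∀ f ∈ S, μ (A f) ≤ ENNReal.ofReal (C₂ ^ k * Ex) := by
    intro f hf
    have hfsum : ∑ i, (f i : ℝ) = (M : ℝ) := by
      exact_mod_cast congrArg (Nat.cast (R := ℝ)) (Finset.Nat.mem_antidiagonalTuple.mp hf)
    have hconv : (t - k) ^ (α / 2) * (k : ℝ) ^ (1 - α / 2) ≤ ∑ i, (f i : ℝ) ^ (α / 2) := by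
      have conv := Real.rpow_arith_mean_le_arith_mean_rpow Finset.univ
        (fun _ => (k : ℝ)⁻¹) (fun i => (f i : ℝ))
        (fun i _ => by positivity)
        (by rw [Finset.sum_const, Finset.card_univ, Fintype.card_fin, nsmul_eq_mul]; field_simp)
        (fun i _ => by positivity) hα2
      rw [← Finset.mul_sum, ← Finset.mul_sum, hfsum] at conv
      have hnn : (0:ℝ) ≤ (k : ℝ)⁻¹ * (t - k) := by
        apply mul_nonneg (by positivity)
        linarith
      have step1 : ((k : ℝ)⁻¹ * (t - k)) ^ (α / 2) ≤ ((k : ℝ)⁻¹ * (M : ℝ)) ^ (α / 2) :=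
        Real.rpow_le_rpow hnn (mul_le_mul_of_nonneg_left hMreal (by positivity)) (by linarith)
      have step2 : (k : ℝ) * (((k : ℝ)⁻¹ * (M : ℝ)) ^ (α / 2)) ≤ ∑ i, (f i : ℝ) ^ (α / 2) := by
        calc (k : ℝ) * (((k : ℝ)⁻¹ * (M : ℝ)) ^ (α / 2))
            ≤ (k : ℝ) * ((k : ℝ)⁻¹ * ∑ i, (f i : ℝ) ^ (α / 2)) :=
              mul_le_mul_of_nonneg_left conv hkpos.le
          _ = ∑ i, (f i : ℝ) ^ (α / 2) := by field_simp
      have hkne : ((k : ℝ)) ^ (α / 2) ≠ 0 := (Real.rpow_pos_of_pos hkpos _).ne'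
      have heqL : (t - k) ^ (α / 2) * (k : ℝ) ^ (1 - α / 2)
          = (k : ℝ) * (((k : ℝ)⁻¹ * (t - k)) ^ (α / 2)) := by
        rw [mul_comm ((k : ℝ)⁻¹) _, ← div_eq_mul_inv, Real.div_rpow (by linarith) hkpos.le,
          Real.rpow_sub hkpos, Real.rpow_one]
        field_simp
      rw [heqL]
      calc (k : ℝ) * (((k : ℝ)⁻¹ * (t - k)) ^ (α / 2))
          ≤ (k : ℝ) * (((k : ℝ)⁻¹ * (M : ℝ)) ^ (α / 2)) :=
            mul_le_mul_of_nonneg_left step1 hkpos.le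
        _ ≤ _ := step2
    rw [hprod f]
    calc ∏ i, μ {ω | (f i : ℝ) ≤ (Y i ω) ^ 2}
        ≤ ∏ i, ENNReal.ofReal (C₂ * Real.exp (-((f i : ℝ) ^ (α / 2)))) :=
          Finset.prod_le_prod' fun i _ => hfac (f i) i
      _ = ENNReal.ofReal (∏ i, (C₂ * Real.exp (-((f i : ℝ) ^ (α / 2))))) :=
          (ENNReal.ofReal_prod_of_nonneg (fun i _ => by positivity)).symm
      _ ≤ ENNReal.ofReal (C₂ ^ k * Ex) := by
          apply ENNReal.ofReal_le_ofReal
          rw [Finset.prod_mul_distrib, Finset.prod_const, Finset.card_univ, Fintype.card_fin,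
            ← Real.exp_sum]
          apply mul_le_mul_of_nonneg_left _ (by positivity)
          apply Real.exp_le_exp.mpr
          rw [Finset.sum_neg_distrib]
          exact neg_le_neg hconv
  -- cardinality bound
  have hcard : ((S.card : ℕ) : ℝ) ≤ (2 * Real.exp 1 * t / k) ^ k := by
    have h1 : ((S.card : ℕ) : ℝ) ≤ (((m + 1).choose k : ℕ) : ℝ) := by
      have := tuple_card_le k M
      rw [hMk] at this
      exact_mod_cast this
    have h2 : (((m + 1).choose k : ℕ) : ℝ) ≤ ((m : ℝ) + 1) ^ k / (k.factorial : ℝ) := by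
      have := Nat.choose_le_pow_div (α := ℝ) k (m + 1)
      push_cast at this ⊢
      exact this
    have heq : ((m : ℝ) + 1) ^ k / (k.factorial : ℝ)
        = (((m : ℝ) + 1) / k) ^ k * ((k : ℝ) ^ k / (k.factorial : ℝ)) := by
      have hfne : (k.factorial : ℝ) ≠ 0 := by positivity
      field_simp
      rw [← mul_pow, div_mul_cancel₀ _ hkpos.ne']
    have h3 : (((m : ℝ) + 1) / k) ^ k * ((k : ℝ) ^ k / (k.factorial : ℝ))
        ≤ (((m : ℝ) + 1) / k) ^ k * Real.exp 1 ^ k := by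
      apply mul_le_mul_of_nonneg_left _ (by positivity)
      rw [← Real.exp_nat_mul, mul_one]
      exact Real.pow_div_factorial_le_exp _ hkpos.le k
    have h4 : (((m : ℝ) + 1) / k) ^ k * Real.exp 1 ^ k
        = (((m : ℝ) + 1) * Real.exp 1 / k) ^ k := by
      rw [← mul_pow]
      congr 1
      ring
    have h5 : (((m : ℝ) + 1) * Real.exp 1 / k) ^ k ≤ (2 * Real.exp 1 * t / k) ^ k := by
      have hk2 : (2:ℝ) ≤ (k:ℝ) := by exact_mod_cast hk
      have h2t : (m : ℝ) + 1 ≤ 2 * t := by linarith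
      exact pow_le_pow_left₀ (by positivity)
        ((div_le_div_iff_of_pos_right hkpos).mpr (by nlinarith [Real.exp_pos 1])) k
    calc ((S.card : ℕ) : ℝ) ≤ (((m + 1).choose k : ℕ) : ℝ) := h1
      _ ≤ ((m : ℝ) + 1) ^ k / (k.factorial : ℝ) := h2
      _ = _ := heq
      _ ≤ _ := h3
      _ = _ := h4
      _ ≤ _ := h5
  -- assembly
  calc μ {ω | t ≤ ∑ i, (Y i ω) ^ 2} ≤ μ (⋃ f ∈ S, A f) := measure_mono hsub
    _ ≤ ∑ f ∈ S, μ (A f) := measure_biUnion_finset_le S A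
    _ ≤ ∑ x ∈ S, ENNReal.ofReal (C₂ ^ k * Ex) := Finset.sum_le_sum hkey
    _ = (S.card : ENNReal) * ENNReal.ofReal (C₂ ^ k * Ex) := by
        rw [Finset.sum_const, nsmul_eq_mul]
    _ ≤ ENNReal.ofReal ((2 * Real.exp 1 * t / k) ^ k) * ENNReal.ofReal (C₂ ^ k * Ex) := by
        apply mul_le_mul_left
        rw [← ENNReal.ofReal_natCast]
        exact ENNReal.ofReal_le_ofReal hcard
    _ = ENNReal.ofReal (C₂ ^ k * (2 * Real.exp 1 * t / k) ^ k * Ex) := by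
        rw [← ENNReal.ofReal_mul (by positivity)]
        congr 1
        ring
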